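/- arXiv:1606.03504 — 2 statements merged into one kernel-verified Lean document; each statement's English description precedes it below -/
import Mathlib

section
/- Let X ∈ ℝ^{d_1×⋯×d_k} and δ = (δ_1,…,δ_k) ∈ (0,1]^k be such that δ_j ≥ max{‖P_j(X)u‖_{ℓ∞} : u ∈ ℝ^{d_j}, ‖u‖_{ℓ2} ≤ 1} for every j = 1,…,k. Then for every tensor W ∈ ℝ^{d_1×⋯×d_k}, ‖Q⁰_X W‖_{∘,δ} = ‖Q⁰_X W‖ ≤ ‖W‖_{∘,δ}. Consequently ‖X‖_{⋆,δ} = ‖X‖_*. -/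
open scoped BigOperators

namespace IncoherentTensor

variable {k : ℕ}

/-- A `k`-th order tensor in `ℝ^{d 1 × ⋯ × d k}`. -/
abbrev Tensor (d : Fin k → ℕ) : Type := (∀ j, Fin (d j)) → ℝ

variable {d : Fin k → ℕ}

/-- Entrywise inner product of tensors. -/
noncomputable def tinner (X Y : Tensor d) : ℝ := ∑ a : ∀ j, Fin (d j), X a * Y a

/-- Hilbert–Schmidt (entrywise ℓ2) norm. -/
noncomputable def hsNorm (X : Tensor d) : ℝ := Real.sqrt (tinner X X)

/-- Largest absolute entry. -/
noncomputable def maxNorm (X : Tensor d) : ℝ := ⨆ a, |X a|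

/-- Euclidean norm of a vector. -/
noncomputable def l2 {n : ℕ} (u : Fin n → ℝ) : ℝ := Real.sqrt (∑ i, u i ^ 2)

/-- Supremum norm of a vector. -/
noncomputable def linf {n : ℕ} (u : Fin n → ℝ) : ℝ := ⨆ i, |u i|

/-- Rank-one tensor `u_1 ⊗ ⋯ ⊗ u_k`. -/
def rankOne (u : ∀ j, Fin (d j) → ℝ) : Tensor d := fun a => ∏ j, u j (a j)

/-- Tensor spectral norm. -/
noncomputable def spectralNorm (X : Tensor d) : ℝ :=
  sSup {r | ∃ u : ∀ j, Fin (d j) → ℝ, (∀ j, l2 (u j) ≤ 1) ∧ r = tinner X (rankOne u)}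

/-- Tensor nuclear norm. -/
noncomputable def nuclearNorm (X : Tensor d) : ℝ :=
  sSup {r | ∃ Y : Tensor d, spectralNorm Y ≤ 1 ∧ r = tinner X Y}

/-- The set `U(δ)` of rank-one tensors satisfying the incoherence constraints in all but
two directions. -/
def Uset (δ : Fin k → ℝ) : Set (Tensor d) :=
  {Y | ∃ j1 j2 : Fin k, j1 < j2 ∧ ∃ u : ∀ j, Fin (d j) → ℝ,
    (∀ j, l2 (u j) ≤ 1) ∧ (∀ j, j ≠ j1 → j ≠ j2 → linf (u j) ≤ δ j) ∧ Y = rankOne u}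

/-- Incoherent spectral norm `‖X‖_{∘,δ}`. -/
noncomputable def onorm (δ : Fin k → ℝ) (X : Tensor d) : ℝ :=
  sSup {r | ∃ Y ∈ Uset (d := d) δ, r = tinner Y X}

/-- Incoherent nuclear norm `‖X‖_{⋆,δ}`. -/
noncomputable def starNorm (δ : Fin k → ℝ) (X : Tensor d) : ℝ :=
  sSup {r | ∃ Y : Tensor d, onorm δ Y ≤ 1 ∧ r = tinner Y X}

/-- The span `L_j(X)` of the mode-`j` fibers of `X`. -/
noncomputable def fiberSpan (X : Tensor d) (j : Fin k) :
    Submodule ℝ (EuclideanSpace ℝ (Fin (d j))) :=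
  Submodule.span ℝ {v | ∃ a : ∀ i, Fin (d i), v = fun i => X (Function.update a j i)}

/-- Tucker rank `r_j(X) = dim L_j(X)`. -/
noncomputable def tuckerRank (X : Tensor d) (j : Fin k) : ℕ :=
  Module.finrank ℝ (fiberSpan X j)

/-- Orthogonal projection `P_j(X)` of `ℝ^{d_j}` onto `L_j(X)`. -/
noncomputable def projMode (X : Tensor d) (j : Fin k) :
    EuclideanSpace ℝ (Fin (d j)) →L[ℝ] EuclideanSpace ℝ (Fin (d j)) :=
  (fiberSpan X j).subtypeL.comp (fiberSpan X j).orthogonalProjectionOnto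

/-- The matrix of `P_j(X)` in the standard basis. -/
noncomputable def Pmat (X : Tensor d) (j : Fin k) : Matrix (Fin (d j)) (Fin (d j)) ℝ :=
  Matrix.of fun a b => projMode X j (EuclideanSpace.single b 1) a

/-- Action of a Kronecker product `A_1 ⊗ ⋯ ⊗ A_k` of matrices on a tensor. -/
noncomputable def kronApply (A : ∀ j, Matrix (Fin (d j)) (Fin (d j)) ℝ) (W : Tensor d) :
    Tensor d :=
  fun a => ∑ b : ∀ j, Fin (d j), (∏ j, A j (a j) (b j)) * W b

/-- `Q⁰_X = P_1 ⊗ ⋯ ⊗ P_k`. -/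
noncomputable def Q0 (X : Tensor d) (W : Tensor d) : Tensor d :=
  kronApply (fun j => Pmat X j) W

/-- `Q_X = Q⁰_X + Σ_j P_1 ⊗ ⋯ ⊗ P_j^⊥ ⊗ ⋯ ⊗ P_k`. -/
noncomputable def QX (X : Tensor d) (W : Tensor d) : Tensor d :=
  Q0 X W + ∑ j : Fin k, kronApply (fun l => if l = j then 1 - Pmat X l else Pmat X l) W

/-- `Q_X^⊥ = I − Q_X`. -/
noncomputable def Qperp (X : Tensor d) (W : Tensor d) : Tensor d := W - QX X W

/-- Coherence `μ(U)` of a subspace of `ℝ^n`. -/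
noncomputable def coherence {n : ℕ} (U : Submodule ℝ (EuclideanSpace ℝ (Fin n))) : ℝ :=
  ((n : ℝ) / (Module.finrank ℝ U : ℝ)) *
    ⨆ i : Fin n, ‖U.orthogonalProjectionOnto (EuclideanSpace.single i 1)‖ ^ 2

/-- Probability of an event on a finite sample space, under the uniform distribution. -/
noncomputable def prob {Ω : Type*} [Fintype Ω] (P : Ω → Prop) : ℝ :=
  (Nat.card {ω : Ω // P ω} : ℝ) / (Fintype.card Ω : ℝ)

/-- `P_ω X` retains the entry `ω` of `X` and zeroes out the rest. -/
noncomputable def Pentry (ω : ∀ j, Fin (d j)) (X : Tensor d) : Tensor d :=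
  fun a => if a = ω then X a else 0

/-- `P_Ω X` retains the entries of `X` on `Ω` and zeroes out the rest. -/
noncomputable def POmega (S : Finset (∀ j, Fin (d j))) (X : Tensor d) : Tensor d :=
  fun a => if a ∈ S then X a else 0

/-- The empirical average `X̄ = (X_1 + ⋯ + X_n)/n` of `X_i = (d_1⋯d_k)·P_{ω_i} A`. -/
noncomputable def sampleAvg (A : Tensor d) (n : ℕ) (s : Fin n → ∀ j, Fin (d j)) : Tensor d :=
  fun a => (1 / (n : ℝ)) * ∑ i : Fin n, (∏ j, (d j : ℝ)) * Pentry (s i) A a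

/-- `Y` is `μ`-incoherent. -/
noncomputable def muIncoherent (μ : ℝ) (Y : Tensor d) : Prop :=
  ∀ j, ∀ u : EuclideanSpace ℝ (Fin (d j)), ‖u‖ ≤ 1 →
    linf (fun i => projMode Y j u i) ≤ Real.sqrt (μ * (tuckerRank Y j : ℝ) / (d j : ℝ))

section Aux

variable {k : ℕ} {d : Fin k → ℕ}

lemma norm_eq_l2 {n : ℕ} (v : EuclideanSpace ℝ (Fin n)) : ‖v‖ = l2 (fun i => v i) := by
  rw [EuclideanSpace.norm_eq, l2]
  congr 1; exact Finset.sum_congr rfl fun i _ => by rw [Real.norm_eq_abs, sq_abs]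

lemma abs_apply_le_l2 {n : ℕ} (u : Fin n → ℝ) (i : Fin n) : |u i| ≤ l2 u := by
  rw [l2, ← Real.sqrt_sq_eq_abs]
  exact Real.sqrt_le_sqrt (Finset.single_le_sum (f := fun i => u i ^ 2)
    (fun j _ => sq_nonneg _) (Finset.mem_univ i))

lemma l2_single {n : ℕ} (i : Fin n) (c : ℝ) :
    l2 (fun j => if j = i then c else 0) = |c| := by
  rw [l2]
  have h : ∀ j : Fin n, (if j = i then c else 0) ^ 2 = if j = i then c ^ 2 else 0 := by
    intro j; split <;> simp
  simp only [h, Finset.sum_ite_eq' Finset.univ i (fun _ => c ^ 2), Finset.mem_univ, if_true,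
    Real.sqrt_sq_eq_abs]

lemma tinner_comm (X Y : Tensor d) : tinner X Y = tinner Y X :=
  Finset.sum_congr rfl fun a _ => mul_comm _ _

lemma tinner_abs_le (X Y : Tensor d) (h : ∀ a, |Y a| ≤ 1) :
    tinner X Y ≤ ∑ a, |X a| := by
  refine le_trans (le_abs_self _) (le_trans (Finset.abs_sum_le_sum_abs _ _)
    (Finset.sum_le_sum fun a _ => ?_))
  rw [abs_mul]
  exact mul_le_of_le_one_right (abs_nonneg _) (h a)

lemma abs_rankOne_le_one (u : ∀ j, Fin (d j) → ℝ) (hu : ∀ j, l2 (u j) ≤ 1)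
    (a : ∀ j, Fin (d j)) : |rankOne u a| ≤ 1 := by
  rw [rankOne, Finset.abs_prod]
  exact Finset.prod_le_one (fun j _ => abs_nonneg _)
    (fun j _ => le_trans (abs_apply_le_l2 _ _) (hu j))

lemma spectralSet_bddAbove (X : Tensor d) :
    BddAbove {r | ∃ u : ∀ j, Fin (d j) → ℝ, (∀ j, l2 (u j) ≤ 1) ∧ r = tinner X (rankOne u)} := by
  refine ⟨∑ a, |X a|, ?_⟩
  rintro r ⟨u, hu, rfl⟩
  exact tinner_abs_le X _ (abs_rankOne_le_one u hu)

lemma spectralSet_nonempty (hk : 0 < k) (X : Tensor d) :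
    Set.Nonempty {r | ∃ u : ∀ j, Fin (d j) → ℝ, (∀ j, l2 (u j) ≤ 1) ∧ r = tinner X (rankOne u)} := by
  refine ⟨0, fun _ _ => 0, fun j => by simp [l2], ?_⟩
  have h0 : rankOne (d := d) (fun _ _ => (0:ℝ)) = fun _ => 0 := by
    funext a; rw [rankOne]
    exact Finset.prod_eq_zero (Finset.mem_univ ⟨0, hk⟩) rfl
  simp [tinner, h0]

end Aux
section Aux2
open scoped RealInnerProductSpace
variable {k : ℕ} {d : Fin k → ℕ}

lemma proj_coord (X : Tensor d) (j : Fin k) (v : EuclideanSpace ℝ (Fin (d j))) (i : Fin (d j)) :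
    projMode X j v i = ⟪EuclideanSpace.single i (1:ℝ), projMode X j v⟫ := by
  rw [EuclideanSpace.inner_single_left]; simp

lemma pmat_symm (X : Tensor d) (j : Fin k) (a b : Fin (d j)) :
    Pmat X j a b = Pmat X j b a := by
  show projMode X j (EuclideanSpace.single b 1) a = projMode X j (EuclideanSpace.single a 1) b
  rw [proj_coord, proj_coord]
  show ⟪EuclideanSpace.single a (1:ℝ), (fiberSpan X j).starProjection (EuclideanSpace.single b 1)⟫
     = ⟪EuclideanSpace.single b (1:ℝ), (fiberSpan X j).starProjection (EuclideanSpace.single a 1)⟫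
  rw [← Submodule.inner_starProjection_left_eq_right, real_inner_comm]

lemma proj_apply (X : Tensor d) (j : Fin k) (v : EuclideanSpace ℝ (Fin (d j))) (i : Fin (d j)) :
    projMode X j v i = ∑ c, Pmat X j i c * v c := by
  rw [proj_coord]
  show ⟪EuclideanSpace.single i (1:ℝ), (fiberSpan X j).starProjection v⟫ = _
  rw [← Submodule.inner_starProjection_left_eq_right]
  rw [show (⟪(fiberSpan X j).starProjection (EuclideanSpace.single i (1:ℝ)), v⟫)
    = ∑ c, projMode X j (EuclideanSpace.single i 1) c * v c from by
      rw [PiLp.inner_apply]; simp only [Real.inner_apply]; rfl]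
  exact Finset.sum_congr rfl fun c _ => by rw [show projMode X j (EuclideanSpace.single i 1) c = Pmat X j c i from rfl, pmat_symm]

lemma proj_fix (X : Tensor d) (j : Fin k) (v : EuclideanSpace ℝ (Fin (d j)))
    (hv : v ∈ fiberSpan X j) : projMode X j v = v := by
  show (fiberSpan X j).starProjection v = v
  exact Submodule.starProjection_eq_self_iff.mpr hv

lemma pmat_idem (X : Tensor d) (j : Fin k) :
    Pmat X j * Pmat X j = Pmat X j := by
  ext a b
  rw [Matrix.mul_apply]
  have h1 : projMode X j (projMode X j (EuclideanSpace.single b 1)) a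
      = ∑ c, Pmat X j a c * Pmat X j c b := proj_apply ..
  rw [← h1]
  have h2 : projMode X j (EuclideanSpace.single b 1) ∈ fiberSpan X j := by
    exact SetLike.coe_mem ((fiberSpan X j).orthogonalProjectionOnto (EuclideanSpace.single b 1))
  rw [proj_fix X j _ h2]; rfl

lemma proj_l2_le (X : Tensor d) (j : Fin k) (v : EuclideanSpace ℝ (Fin (d j))) :
    l2 (fun i => projMode X j v i) ≤ ‖v‖ := by
  rw [← norm_eq_l2]
  calc ‖projMode X j v‖ = ‖(fiberSpan X j).orthogonalProjectionOnto v‖ := by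
        exact Submodule.norm_coe _
    _ ≤ ‖(fiberSpan X j).orthogonalProjectionOnto‖ * ‖v‖ := ContinuousLinearMap.le_opNorm _ _
    _ ≤ 1 * ‖v‖ := by
        exact mul_le_mul_of_nonneg_right (Submodule.orthogonalProjectionOnto_norm_le _) (norm_nonneg _)
    _ = ‖v‖ := one_mul _

end Aux2
section Aux3
variable {k : ℕ} {d : Fin k → ℕ}

lemma kron_one (W : Tensor d) :
    kronApply (fun _ => (1 : Matrix _ _ ℝ)) W = W := by
  classical
  funext a
  show ∑ b : ∀ j, Fin (d j), (∏ j, (1 : Matrix (Fin (d j)) (Fin (d j)) ℝ) (a j) (b j)) * W b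
      = W a
  rw [Finset.sum_eq_single a]
  · simp [Matrix.one_apply]
  · intro b _ hb
    obtain ⟨j, hj⟩ : ∃ j, a j ≠ b j := by
      by_contra h; push_neg at h; exact hb (funext fun j => (h j).symm)
    rw [Finset.prod_eq_zero (Finset.mem_univ j) (by simp [Matrix.one_apply, hj]), zero_mul]
  · simp

lemma kron_comp (A B : ∀ j, Matrix (Fin (d j)) (Fin (d j)) ℝ) (W : Tensor d) :
    kronApply A (kronApply B W) = kronApply (fun j => A j * B j) W := by
  classical
  funext a
  show ∑ b : ∀ j, Fin (d j), (∏ j, A j (a j) (b j)) *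
        (∑ c : ∀ j, Fin (d j), (∏ j, B j (b j) (c j)) * W c)
      = ∑ c : ∀ j, Fin (d j), (∏ j, (A j * B j) (a j) (c j)) * W c
  simp only [Finset.mul_sum]
  rw [Finset.sum_comm]
  refine Finset.sum_congr rfl fun c _ => ?_
  simp only [Matrix.mul_apply]
  rw [Fintype.prod_sum (f := fun j bj => A j (a j) bj * B j bj (c j)), Finset.sum_mul]
  refine Finset.sum_congr rfl fun b _ => ?_
  rw [Finset.prod_mul_distrib, ← mul_assoc]

lemma kron_rankOne (A : ∀ j, Matrix (Fin (d j)) (Fin (d j)) ℝ) (u : ∀ j, Fin (d j) → ℝ) :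
    kronApply A (rankOne u) = rankOne (fun j i => ∑ b, A j i b * u j b) := by
  classical
  funext a
  show ∑ b : ∀ j, Fin (d j), (∏ j, A j (a j) (b j)) * (∏ j, u j (b j))
      = ∏ j, ∑ bj, A j (a j) bj * u j bj
  rw [Fintype.prod_sum (f := fun j bj => A j (a j) bj * u j bj)]
  exact Finset.sum_congr rfl fun b _ => (Finset.prod_mul_distrib).symm

lemma kron_mode_fix (X : Tensor d) (j0 : Fin k) :
    kronApply (fun j => if j = j0 then Pmat X j else 1) X = X := by
  classical
  funext a
  show ∑ b : ∀ j, Fin (d j), (∏ j, (if j = j0 then Pmat X j else 1) (a j) (b j)) * X b = X a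
  have h1 : ∀ b ∈ Finset.univ,
      b ∉ Finset.univ.image (fun i => Function.update a j0 i) →
      (∏ j, (if j = j0 then Pmat X j else 1) (a j) (b j)) * X b = 0 := by
    intro b _ hb
    obtain ⟨j, hj, hne⟩ : ∃ j, j ≠ j0 ∧ b j ≠ a j := by
      by_contra h; push_neg at h
      refine hb (Finset.mem_image.mpr ⟨b j0, Finset.mem_univ _, ?_⟩)
      funext j
      by_cases hj : j = j0
      · subst hj; rw [Function.update_self]
      · rw [Function.update_of_ne hj]; exact (h j hj).symm
    have hz : (if j = j0 then Pmat X j else 1) (a j) (b j) = 0 := by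
      rw [if_neg hj]; simp [Matrix.one_apply, Ne.symm hne]
    rw [Finset.prod_eq_zero (Finset.mem_univ j) hz, zero_mul]
  have hinj : ∀ x ∈ Finset.univ, ∀ y ∈ Finset.univ,
      Function.update a j0 x = Function.update a j0 y → x = y := by
    intro x _ y _ h
    have := congrFun h j0
    rwa [Function.update_self, Function.update_self] at this
  rw [← Finset.sum_subset (Finset.subset_univ _) h1, Finset.sum_image hinj]
  have h2 : ∀ i, (∏ j, (if j = j0 then Pmat X j else 1) (a j) (Function.update a j0 i j))
      = Pmat X j0 (a j0) i := by
    intro i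
    rw [Finset.prod_eq_single j0]
    · rw [if_pos rfl, Function.update_self]
    · intro j _ hj
      rw [if_neg hj, Function.update_of_ne hj, Matrix.one_apply_eq]
    · simp
  simp only [h2]
  have hv : WithLp.toLp 2 (fun i => X (Function.update a j0 i)) ∈ fiberSpan X j0 :=
    Submodule.subset_span ⟨a, rfl⟩
  have hfix := proj_fix X j0 _ hv
  calc ∑ i, Pmat X j0 (a j0) i * X (Function.update a j0 i)
      = projMode X j0 (WithLp.toLp 2 (fun i => X (Function.update a j0 i))) (a j0) :=
        (proj_apply X j0 (WithLp.toLp 2 (fun i => X (Function.update a j0 i))) (a j0)).symm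
    _ = X (Function.update a j0 (a j0)) :=
        congrArg (fun w : EuclideanSpace ℝ (Fin (d j0)) => w (a j0)) hfix
    _ = X a := by rw [Function.update_eq_self]

lemma kron_finset_fix (X : Tensor d) (s : Finset (Fin k)) :
    kronApply (fun j => if j ∈ s then Pmat X j else 1) X = X := by
  classical
  induction s using Finset.induction_on with
  | empty => simpa using kron_one X
  | @insert j0 s hj0 ih =>
    have hs : (fun j => if j ∈ insert j0 s then Pmat X j else 1)
        = fun j => (if j = j0 then Pmat X j else 1) * (if j ∈ s then Pmat X j else 1) := by
      funext j
      by_cases h1 : j = j0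
      · subst h1
        rw [if_pos (Finset.mem_insert_self _ _), if_pos rfl, if_neg hj0, mul_one]
      · by_cases h2 : j ∈ s
        · rw [if_pos (Finset.mem_insert_of_mem h2), if_neg h1, if_pos h2, one_mul]
        · rw [if_neg (by simp [h1, h2]), if_neg h1, if_neg h2, one_mul]
    rw [hs, ← kron_comp, ih, kron_mode_fix]

lemma Q0_self (X : Tensor d) : Q0 X X = X := by
  classical
  have hP : (fun j => Pmat X j) = fun j => if j ∈ Finset.univ then Pmat X j else 1 := by
    funext j; rw [if_pos (Finset.mem_univ j)]
  rw [Q0, hP]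
  exact kron_finset_fix X Finset.univ

lemma Q0_idem (X W : Tensor d) : Q0 X (Q0 X W) = Q0 X W := by
  rw [Q0, Q0, kron_comp]
  have h : (fun j => Pmat X j * Pmat X j) = fun j => Pmat X j :=
    funext fun j => pmat_idem X j
  rw [h]

lemma tinner_Q0 (X W Z : Tensor d) : tinner (Q0 X W) Z = tinner W (Q0 X Z) := by
  simp only [tinner, Q0, kronApply, Finset.sum_mul, Finset.mul_sum]
  rw [Finset.sum_comm]
  refine Finset.sum_congr rfl fun b _ => Finset.sum_congr rfl fun a _ => ?_
  rw [show ∏ j, Pmat X j (a j) (b j) = ∏ j, Pmat X j (b j) (a j) from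
    Finset.prod_congr rfl fun j _ => pmat_symm X j _ _]
  ring

lemma Q0_rankOne (X : Tensor d) (u : ∀ j, Fin (d j) → ℝ) :
    Q0 X (rankOne u) = rankOne (fun j i => projMode X j (WithLp.toLp 2 (u j)) i) := by
  rw [Q0, kron_rankOne]
  have h : (fun j i => ∑ b, Pmat X j i b * u j b)
      = fun (j : Fin k) (i : Fin (d j)) => projMode X j (WithLp.toLp 2 (u j)) i := by
    funext j i; exact (proj_apply X j (WithLp.toLp 2 (u j)) i).symm
  rw [h]

end Aux3
section Aux4
variable {k : ℕ} {d : Fin k → ℕ}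

lemma tinner_rankOne_ite (Z : Tensor d) (a : ∀ j, Fin (d j)) (c : Fin k → ℝ) :
    tinner Z (rankOne (fun j i => if i = a j then c j else 0)) = (∏ j, c j) * Z a := by
  classical
  rw [tinner]
  rw [Finset.sum_eq_single a]
  · rw [rankOne]; simp [mul_comm]
  · intro b _ hb
    obtain ⟨j, hj⟩ : ∃ j, b j ≠ a j := by
      by_contra h; push_neg at h; exact hb (funext h)
    rw [rankOne, Finset.prod_eq_zero (Finset.mem_univ j) (by simp [hj]), mul_zero]
  · simp

lemma abs_entry_le_spectral (hk : 0 < k) (Z : Tensor d) (a : ∀ j, Fin (d j)) :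
    |Z a| ≤ spectralNorm Z := by
  classical
  set j0 : Fin k := ⟨0, hk⟩
  have key : ∀ ε : ℝ, |ε| ≤ 1 → ε * Z a ≤ spectralNorm Z := by
    intro ε hε
    set u : ∀ j, Fin (d j) → ℝ := fun j i => if i = a j then (if j = j0 then ε else 1) else 0
    have hu : ∀ j, l2 (u j) ≤ 1 := by
      intro j
      rw [show u j = fun i => if i = a j then (if j = j0 then ε else 1) else 0 from rfl,
        l2_single]
      by_cases h : j = j0 <;> simp [h, hε]
    have hval : tinner Z (rankOne u) = ε * Z a := by
      rw [tinner_rankOne_ite Z a (fun j => if j = j0 then ε else 1)]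
      congr 1
      rw [Finset.prod_ite_eq' Finset.univ j0 (fun _ => ε), if_pos (Finset.mem_univ j0)]
    calc ε * Z a = tinner Z (rankOne u) := hval.symm
      _ ≤ spectralNorm Z := le_csSup (spectralSet_bddAbove Z) ⟨u, hu, rfl⟩
  rcases abs_le.mp (le_refl |Z a|) with _
  rcases le_or_gt 0 (Z a) with h | h
  · simpa [abs_of_nonneg h] using key 1 (by norm_num)
  · simpa [abs_of_neg h] using key (-1) (by norm_num)

lemma oset_subset_spectralset (δ : Fin k → ℝ) (X : Tensor d) :
    {r | ∃ Y ∈ Uset (d := d) δ, r = tinner Y X}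
      ⊆ {r | ∃ u : ∀ j, Fin (d j) → ℝ, (∀ j, l2 (u j) ≤ 1) ∧ r = tinner X (rankOne u)} := by
  rintro r ⟨Y, ⟨j1, j2, _, u, hu, _, rfl⟩, rfl⟩
  exact ⟨u, hu, tinner_comm _ _⟩

lemma oset_nonempty (hk : 2 ≤ k) (δ : Fin k → ℝ) (hδ : ∀ j, 0 < δ j) (X : Tensor d) :
    Set.Nonempty {r | ∃ Y ∈ Uset (d := d) δ, r = tinner Y X} := by
  classical
  refine ⟨0, rankOne (fun _ _ => 0), ⟨⟨0, by omega⟩, ⟨1, by omega⟩, by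
      simp [Fin.lt_def], fun _ _ => 0, fun j => by simp [l2], fun j _ _ => ?_, rfl⟩, ?_⟩
  · refine Real.iSup_le (fun i => by simp [(hδ j).le]) (hδ j).le
  · have h0 : rankOne (d := d) (fun _ _ => (0:ℝ)) = fun _ => 0 := by
      funext a; exact Finset.prod_eq_zero (Finset.mem_univ ⟨0, by omega⟩) rfl
    simp [tinner, h0]

end Aux4

/-- Proposition 2 of Yuan–Zhang: if `δ_j` dominates the incoherence of
`L_j(X)` for every `j`, then `‖Q⁰_X W‖_{∘,δ} = ‖Q⁰_X W‖ ≤ ‖W‖_{∘,δ}` for every `W`, and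
consequently `‖X‖_{⋆,δ} = ‖X‖_*`. -/
theorem statement1 {k : ℕ} (hk : 2 ≤ k) {d : Fin k → ℕ} (X : Tensor d)
    (δ : Fin k → ℝ) (hδ : ∀ j, δ j ∈ Set.Ioc (0 : ℝ) 1)
    (hmax : ∀ j, ∀ u : EuclideanSpace ℝ (Fin (d j)), ‖u‖ ≤ 1 →
      linf (fun i => projMode X j u i) ≤ δ j) :
    (∀ W : Tensor d,
      onorm δ (Q0 X W) = spectralNorm (Q0 X W) ∧ spectralNorm (Q0 X W) ≤ onorm δ W) ∧
    starNorm δ X = nuclearNorm X := by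
  classical
  have hk1 : 0 < k := by omega
  have hδpos : ∀ j, 0 < δ j := fun j => (hδ j).1
  have hproj : ∀ u : ∀ j, Fin (d j) → ℝ, (∀ j, l2 (u j) ≤ 1) →
      rankOne (d := d) (fun j i => projMode X j (WithLp.toLp 2 (u j)) i) ∈ Uset (d := d) δ ∧
      Q0 X (rankOne u) = rankOne (fun j i => projMode X j (WithLp.toLp 2 (u j)) i) := by
    intro u hu
    refine ⟨⟨⟨0, by omega⟩, ⟨1, by omega⟩, by simp [Fin.lt_def],
      fun j i => projMode X j (WithLp.toLp 2 (u j)) i, ?_, ?_, rfl⟩, Q0_rankOne X u⟩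
    · intro j
      have h1 := proj_l2_le X j (WithLp.toLp 2 (u j))
      rw [norm_eq_l2 (n := d j) (WithLp.toLp 2 (u j))] at h1
      exact le_trans h1 (hu j)
    · intro j _ _
      exact hmax j (WithLp.toLp 2 (u j)) (by rw [norm_eq_l2]; exact hu j)
  have hO_bdd : ∀ Z : Tensor d, BddAbove {r | ∃ Y ∈ Uset (d := d) δ, r = tinner Y Z} :=
    fun Z => (spectralSet_bddAbove Z).mono (oset_subset_spectralset δ Z)
  have hpart : ∀ W : Tensor d,
      onorm δ (Q0 X W) = spectralNorm (Q0 X W) ∧ spectralNorm (Q0 X W) ≤ onorm δ W := by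
    intro W
    have h3 : spectralNorm (Q0 X W) ≤ onorm δ W := by
      rw [spectralNorm, onorm]
      refine csSup_le (spectralSet_nonempty hk1 _) ?_
      rintro r ⟨u, hu, rfl⟩
      obtain ⟨hmem, hQ⟩ := hproj u hu
      have heq : tinner (Q0 X W) (rankOne u)
          = tinner (rankOne (fun j i => projMode X j (WithLp.toLp 2 (u j)) i)) W := by
        rw [tinner_Q0 X W (rankOne u), hQ]
        exact tinner_comm _ _
      rw [heq]
      exact le_csSup (hO_bdd W) ⟨_, hmem, rfl⟩
    have h1 : onorm δ (Q0 X W) ≤ spectralNorm (Q0 X W) := by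
      rw [spectralNorm, onorm]
      exact csSup_le_csSup (spectralSet_bddAbove _) (oset_nonempty hk δ hδpos _)
        (oset_subset_spectralset δ _)
    have h2 : spectralNorm (Q0 X W) ≤ onorm δ (Q0 X W) := by
      rw [spectralNorm, onorm]
      refine csSup_le (spectralSet_nonempty hk1 _) ?_
      rintro r ⟨u, hu, rfl⟩
      obtain ⟨hmem, hQ⟩ := hproj u hu
      have heq : tinner (Q0 X W) (rankOne u)
          = tinner (rankOne (fun j i => projMode X j (WithLp.toLp 2 (u j)) i)) (Q0 X W) := by
        calc tinner (Q0 X W) (rankOne u) = tinner (Q0 X (Q0 X W)) (rankOne u) := by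
              rw [Q0_idem]
          _ = tinner (Q0 X W) (Q0 X (rankOne u)) := tinner_Q0 X (Q0 X W) (rankOne u)
          _ = tinner (Q0 X W) (rankOne (fun j i => projMode X j (WithLp.toLp 2 (u j)) i)) := by rw [hQ]
          _ = _ := tinner_comm _ _
      rw [heq]
      exact le_csSup (hO_bdd _) ⟨_, hmem, rfl⟩
    exact ⟨le_antisymm h1 h2, h3⟩
  refine ⟨hpart, ?_⟩
  have hQXX : Q0 X X = X := Q0_self X
  have hnuc_bdd : BddAbove {r | ∃ Y : Tensor d, spectralNorm Y ≤ 1 ∧ r = tinner X Y} := by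
    refine ⟨∑ a, |X a|, ?_⟩
    rintro r ⟨Y, hY, rfl⟩
    exact tinner_abs_le X Y (fun a => le_trans (abs_entry_le_spectral hk1 Y a) hY)
  have hzero_spec : spectralNorm (d := d) (fun _ => 0) ≤ 1 := by
    rw [spectralNorm]
    refine csSup_le (spectralSet_nonempty hk1 _) ?_
    rintro r ⟨u, _, rfl⟩
    simp [tinner]
  have hzero_onorm : onorm (d := d) δ (fun _ => 0) ≤ 1 := by
    rw [onorm]
    refine csSup_le (oset_nonempty hk δ hδpos _) ?_
    rintro r ⟨Y, _, rfl⟩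
    simp [tinner]
  have hnuc_ne : Set.Nonempty {r | ∃ Y : Tensor d, spectralNorm Y ≤ 1 ∧ r = tinner X Y} :=
    ⟨0, ⟨fun _ => 0, hzero_spec, by simp [tinner]⟩⟩
  have hstar_ne : Set.Nonempty {r | ∃ Y : Tensor d, onorm δ Y ≤ 1 ∧ r = tinner Y X} :=
    ⟨0, ⟨fun _ => 0, hzero_onorm, by simp [tinner]⟩⟩
  have hsub : {r | ∃ Y : Tensor d, spectralNorm Y ≤ 1 ∧ r = tinner X Y}
      ⊆ {r | ∃ Y : Tensor d, onorm δ Y ≤ 1 ∧ r = tinner Y X} := by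
    rintro r ⟨Y, hY, rfl⟩
    refine ⟨Y, le_trans ?_ hY, tinner_comm X Y⟩
    rw [spectralNorm, onorm]
    exact csSup_le_csSup (spectralSet_bddAbove Y) (oset_nonempty hk δ hδpos Y)
      (oset_subset_spectralset δ Y)
  have hstar_bdd : BddAbove {r | ∃ Y : Tensor d, onorm δ Y ≤ 1 ∧ r = tinner Y X} := by
    refine ⟨∑ a, |X a|, ?_⟩
    rintro r ⟨Y, hY, rfl⟩
    have h4 : spectralNorm (Q0 X Y) ≤ 1 := le_trans (hpart Y).2 hY
    have h5 : tinner (Q0 X Y) X = tinner Y X := by rw [tinner_Q0 X Y X, hQXX]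
    have h6 : tinner Y X = tinner X (Q0 X Y) := by rw [← h5]; exact tinner_comm _ _
    rw [h6]
    exact tinner_abs_le X _ (fun a => le_trans (abs_entry_le_spectral hk1 _ a) h4)
  apply le_antisymm
  · rw [starNorm, nuclearNorm]
    refine csSup_le hstar_ne ?_
    rintro r ⟨Y, hY, rfl⟩
    have h4 : spectralNorm (Q0 X Y) ≤ 1 := le_trans (hpart Y).2 hY
    have h5 : tinner (Q0 X Y) X = tinner Y X := by rw [tinner_Q0 X Y X, hQXX]
    have h6 : tinner Y X = tinner X (Q0 X Y) := by rw [← h5]; exact tinner_comm _ _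
    rw [h6]
    exact le_csSup hnuc_bdd ⟨Q0 X Y, h4, rfl⟩
  · rw [starNorm, nuclearNorm]
    exact csSup_le_csSup hstar_bdd hnuc_ne hsub

end IncoherentTensor
end

section
/- Let d be a positive integer, δ ∈ [1/√d, 1], let m be the integer with 2^{m/2} < δ√d ≤ 2^{(m+1)/2}, and let 0 < c ≤ 1. Then the set {w ∈ ℝ^d : ‖w‖_{ℓ2} ≤ c and every coordinate of w belongs to {± c·2^{j/2}/√(2d) : j = 0,…,m}} has cardinality at most exp(1.344 + 3.082·d). -/
open scoped BigOperators

namespace IncoherentTensor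

variable {k : ℕ}

variable {d : Fin k → ℕ}

/-- second part of Lemma A: cardinality bound for the discretized set. -/
theorem statement5 (d : ℕ) (hd : 0 < d) (δ : ℝ)
    (hδ : δ ∈ Set.Icc (1 / Real.sqrt d) 1)
    (m : ℕ) (hm1 : (2 : ℝ) ^ ((m : ℝ) / 2) < δ * Real.sqrt d)
    (hm2 : δ * Real.sqrt d ≤ (2 : ℝ) ^ (((m : ℝ) + 1) / 2))
    (c : ℝ) (hc : 0 < c) (hc1 : c ≤ 1) :
    (Nat.card {w : Fin d → ℝ // l2 w ≤ c ∧
      ∀ i, ∃ j : ℕ, j ≤ m ∧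
        (w i = c * (2 : ℝ) ^ ((j : ℝ) / 2) / Real.sqrt (2 * d) ∨
         w i = -(c * (2 : ℝ) ^ ((j : ℝ) / 2) / Real.sqrt (2 * d)))} : ℝ) ≤
      Real.exp (1.344 + 3.082 * d) := by
  classical
  have hd' : (0:ℝ) < d := by exact_mod_cast hd
  have h2d : (0:ℝ) < 2*d := by linarith
  set v : ℕ → ℝ := fun j => c * (2:ℝ) ^ ((j:ℝ)/2) / Real.sqrt (2*d) with hv_def
  have hvpos : ∀ j, 0 < v j := fun j =>
    div_pos (mul_pos hc (Real.rpow_pos_of_pos (by norm_num) _)) (Real.sqrt_pos.2 h2d)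
  have hvsq : ∀ j : ℕ, (v j)^2 = c^2 * (2:ℝ)^j / (2*(d:ℝ)) := by
    intro j
    have h1 : ((2:ℝ) ^ ((j:ℝ)/2))^2 = (2:ℝ)^(j:ℕ) := by
      rw [← Real.rpow_natCast ((2:ℝ)^((j:ℝ)/2)) 2, ← Real.rpow_mul (by norm_num : (0:ℝ) ≤ 2),
          ← Real.rpow_natCast 2 j]
      norm_num
    have h2 : (Real.sqrt (2*(d:ℝ)))^2 = 2*d := Real.sq_sqrt h2d.le
    simp only [hv_def, div_pow, mul_pow, h1, h2]
  set A := {w : Fin d → ℝ // l2 w ≤ c ∧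
      ∀ i, ∃ j : ℕ, j ≤ m ∧ (w i = v j ∨ w i = -(v j))} with hA_def
  have hJ : ∀ (w : A) (i : Fin d), ∃ j : ℕ, j ≤ m ∧ (w.1 i = v j ∨ w.1 i = -(v j)) :=
    fun w i => w.2.2 i
  set J : A → Fin d → ℕ := fun w i => (hJ w i).choose with hJ_def
  have hJm : ∀ w i, J w i ≤ m := fun w i => (hJ w i).choose_spec.1
  have hJv : ∀ w i, w.1 i = v (J w i) ∨ w.1 i = -(v (J w i)) := fun w i => (hJ w i).choose_spec.2
  -- sum bound
  have hsum : ∀ w : A, ∑ i, (2:ℕ)^(J w i) ≤ 2*d := by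
    intro w
    have hl2 : ∑ i, (w.1 i)^2 ≤ c^2 := by
      have h := w.2.1
      simp only [l2] at h
      have h0 : 0 ≤ ∑ i, (w.1 i)^2 := by positivity
      nlinarith [Real.sq_sqrt h0, Real.sqrt_nonneg (∑ i, (w.1 i)^2)]
    have hsq : ∀ i, (w.1 i)^2 = c^2 * (2:ℝ)^(J w i) / (2*(d:ℝ)) := by
      intro i
      rcases hJv w i with h | h
      · rw [h, hvsq]
      · rw [h, neg_sq, hvsq]
    rw [Finset.sum_congr rfl (fun i _ => hsq i)] at hl2
    rw [← Finset.sum_div, ← Finset.mul_sum] at hl2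
    rw [div_le_iff₀ h2d] at hl2
    have hc2 : (0:ℝ) < c^2 := by positivity
    have hS : (∑ i, (2:ℝ)^(J w i)) ≤ 2*(d:ℝ) := by
      have := (mul_le_mul_iff_right₀ hc2).1 (by linarith [hl2] : c^2 * (∑ i, (2:ℝ)^(J w i)) ≤ c^2 * (2*(d:ℝ)))
      exact this
    have : ((∑ i, (2:ℕ)^(J w i) : ℕ) : ℝ) ≤ ((2*d : ℕ) : ℝ) := by push_cast; exact hS
    exact_mod_cast this
  -- encoding
  set dec : Fin (m+1) × Bool → ℝ := fun p => if p.2 then v (p.1 : ℕ) else -(v (p.1 : ℕ)) with hdec_def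
  set enc : A → {g : Fin d → Fin (m+1) × Bool // ∑ i, 2^(((g i).1 : ℕ)) ≤ 2*d} :=
    fun w => ⟨fun i => (⟨J w i, Nat.lt_succ_of_le (hJm w i)⟩, decide (0 < w.1 i)), by
      simpa using hsum w⟩ with henc_def
  have hdecenc : ∀ (w : A) (i : Fin d), dec ((enc w).1 i) = w.1 i := by
    intro w i
    rcases hJv w i with h | h
    · have hpos : 0 < w.1 i := h ▸ hvpos _
      have hb : decide (0 < w.1 i) = true := decide_eq_true hpos
      simp only [henc_def, hdec_def, hb, if_true]
      exact h.symm
    · have hneg : ¬ (0 < w.1 i) := by rw [h]; simp only [not_lt]; linarith [hvpos (J w i)]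
      have hb : decide (0 < w.1 i) = false := decide_eq_false hneg
      simp only [henc_def, hdec_def, hb, Bool.false_eq_true, if_false]
      exact h.symm
  have hinj : Function.Injective enc := by
    intro w w' h
    apply Subtype.ext; funext i
    rw [← hdecenc w i, ← hdecenc w' i, h]
  have hcard1 : Nat.card A ≤ Nat.card {g : Fin d → Fin (m+1) × Bool // ∑ i, 2^(((g i).1 : ℕ)) ≤ 2*d} :=
    Nat.card_le_card_of_injective enc hinj
  -- count the target
  have hcard2 : ((Nat.card {g : Fin d → Fin (m+1) × Bool // ∑ i, 2^(((g i).1 : ℕ)) ≤ 2*d}) : ℝ)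
      ≤ 8^d := by
    rw [Nat.card_eq_fintype_card, Fintype.card_subtype]
    set T := Finset.univ.filter (fun g : Fin d → Fin (m+1) × Bool => ∑ i, 2^(((g i).1 : ℕ)) ≤ 2*d) with hT
    have step1 : (T.card : ℝ) ≤ ∑ g ∈ T, (4:ℝ)^d * ∏ i, ((1:ℝ)/2)^(2^(((g i).1 : ℕ))) := by
      rw [Finset.card_eq_sum_ones, Nat.cast_sum]
      apply Finset.sum_le_sum
      intro g hg
      have hgs := (Finset.mem_filter.1 hg).2
      have hps : ∏ i, ((1:ℝ)/2)^(2^(((g i).1 : ℕ))) = ((1:ℝ)/2)^(∑ i, 2^(((g i).1 : ℕ))) :=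
        Finset.prod_pow_eq_pow_sum _ _ _
      have h14 : ((1:ℝ)/4)^d ≤ ((1:ℝ)/2)^(∑ i, 2^(((g i).1 : ℕ))) := by
        have he : ((1:ℝ)/2)^(2*d) = ((1:ℝ)/4)^d := by rw [pow_mul]; norm_num
        rw [← he]
        exact pow_le_pow_of_le_one (by norm_num) (by norm_num) hgs
      push_cast
      calc (1:ℝ) = 4^d * ((1:ℝ)/4)^d := by rw [← mul_pow]; norm_num
        _ ≤ 4^d * ((1:ℝ)/2)^(∑ i, 2^(((g i).1 : ℕ))) := by
            apply mul_le_mul_of_nonneg_left h14 (by positivity)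
        _ = 4^d * ∏ i, ((1:ℝ)/2)^(2^(((g i).1 : ℕ))) := by rw [hps]
    have step2 : ∑ g ∈ T, (4:ℝ)^d * ∏ i, ((1:ℝ)/2)^(2^(((g i).1 : ℕ)))
        ≤ ∑ g : Fin d → Fin (m+1) × Bool, (4:ℝ)^d * ∏ i, ((1:ℝ)/2)^(2^(((g i).1 : ℕ))) := by
      apply Finset.sum_le_sum_of_subset_of_nonneg (Finset.filter_subset _ _)
      intro g _ _
      positivity
    have step3 : ∑ g : Fin d → Fin (m+1) × Bool, (4:ℝ)^d * ∏ i, ((1:ℝ)/2)^(2^(((g i).1 : ℕ)))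
        = (4:ℝ)^d * (∑ p : Fin (m+1) × Bool, ((1:ℝ)/2)^(2^((p.1 : ℕ))))^d := by
      rw [← Finset.mul_sum]
      congr 1
      exact (Fintype.sum_pow (fun p : Fin (m+1) × Bool => ((1:ℝ)/2)^(2^((p.1:ℕ)))) d).symm
    have hSle : (∑ p : Fin (m+1) × Bool, ((1:ℝ)/2)^(2^((p.1 : ℕ)))) ≤ 2 := by
      rw [Fintype.sum_prod_type]
      have : ∀ j : Fin (m+1), ∑ _b : Bool, ((1:ℝ)/2)^(2^((j:ℕ))) = 2 * ((1:ℝ)/2)^(2^((j:ℕ))) := by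
        intro j; simp
      rw [Finset.sum_congr rfl (fun j _ => this j), ← Finset.mul_sum]
      have h1 : ∑ j : Fin (m+1), ((1:ℝ)/2)^(2^((j:ℕ))) ≤ ∑ j : Fin (m+1), ((1:ℝ)/2)^((j:ℕ)+1) := by
        apply Finset.sum_le_sum
        intro j _
        exact pow_le_pow_of_le_one (by norm_num) (by norm_num) (Nat.lt_two_pow_self (n := (j:ℕ)))
      have h2 : ∑ j : Fin (m+1), ((1:ℝ)/2)^((j:ℕ)+1) ≤ 1 := by
        rw [Fin.sum_univ_eq_sum_range (fun j => ((1:ℝ)/2)^(j+1))]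
        have := sum_geometric_two_le (m+1)
        calc ∑ j ∈ Finset.range (m+1), ((1:ℝ)/2)^(j+1)
            = (1/2) * ∑ j ∈ Finset.range (m+1), ((1:ℝ)/2)^j := by
              rw [Finset.mul_sum]; apply Finset.sum_congr rfl; intro j _; ring
          _ ≤ (1/2) * 2 := by
              apply mul_le_mul_of_nonneg_left _ (by norm_num)
              simpa using this
          _ = 1 := by norm_num
      linarith
    calc (T.card : ℝ) ≤ (4:ℝ)^d * (∑ p : Fin (m+1) × Bool, ((1:ℝ)/2)^(2^((p.1 : ℕ))))^d := by
          rw [← step3]; exact le_trans step1 step2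
      _ ≤ (4:ℝ)^d * 2^d := by
          apply mul_le_mul_of_nonneg_left _ (by positivity)
          apply pow_le_pow_left₀ (Finset.sum_nonneg (fun p _ => by positivity)) hSle
      _ = 8^d := by rw [← mul_pow]; norm_num
  -- combine
  have h8 : (8:ℝ)^d ≤ Real.exp (1.344 + 3.082 * d) := by
    have he1 : (2:ℝ) ≤ Real.exp 1 := by
      have := Real.exp_one_gt_d9; linarith
    have h8e : (8:ℝ) ≤ Real.exp 3 := by
      have : ((2:ℝ))^(3:ℕ) ≤ (Real.exp 1)^(3:ℕ) := pow_le_pow_left₀ (by norm_num) he1 3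
      calc (8:ℝ) = 2^(3:ℕ) := by norm_num
        _ ≤ (Real.exp 1)^(3:ℕ) := this
        _ = Real.exp 3 := by rw [← Real.exp_nat_mul]; norm_num
    calc (8:ℝ)^d ≤ (Real.exp 3)^d := pow_le_pow_left₀ (by norm_num) h8e d
      _ = Real.exp (3*d) := by rw [← Real.exp_nat_mul]; ring_nf
      _ ≤ Real.exp (1.344 + 3.082 * d) := by
          apply Real.exp_le_exp.2
          have : (0:ℝ) ≤ d := by positivity
          nlinarith
  calc ((Nat.card A : ℕ) : ℝ) ≤ ((Nat.card {g : Fin d → Fin (m+1) × Bool // ∑ i, 2^(((g i).1 : ℕ)) ≤ 2*d}) : ℝ) := by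
        exact_mod_cast hcard1
    _ ≤ 8^d := hcard2
    _ ≤ Real.exp (1.344 + 3.082 * d) := h8

end IncoherentTensor
end
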